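/- arXiv:1506.04254 — 7 statements merged into one kernel-verified Lean document; each statement's English description precedes it below -/
import Mathlib

section
/- There is a constant C = C(d) > 0 such that for every closed set E ⊆ ℝ^d, every point x ∈ ℝ^d and every t > 0, ∫_E e^{-|x-y|²/t} dy ≤ C ⟨dist(x,E)⟩^{d-1} ⟨t⟩^{d/2} e^{-dist(x,E)²/t}, where dist(x,E) is the Euclidean distance from x to E and ⟨s⟩=(1+s²)^{1/2}. -/
open MeasureTheory Set
open Real


lemma integral_Ioi_translate (F : ℝ → ℝ) (D : ℝ) :
    ∫ r in Ioi D, F r = ∫ s in Ioi (0:ℝ), F (s + D) := by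
  rw [← integral_indicator measurableSet_Ioi, ← integral_indicator measurableSet_Ioi,
    ← integral_add_right_eq_self (fun r => (Ioi D).indicator F r) D]
  congr 1
  ext s
  by_cases h : 0 < s
  · rw [indicator_of_mem (by simpa using h), indicator_of_mem (by simpa using h)]
  · rw [indicator_of_notMem (by simpa using h), indicator_of_notMem (by simpa using h)]

lemma gauss_moment (k : ℕ) (t : ℝ) (ht : 0 < t) :
    ∫ s in Ioi (0:ℝ), s ^ k * Real.exp (-s^2/t)
      = t ^ (((k:ℝ)+1)/2) * (Real.Gamma (((k:ℝ)+1)/2) / 2) := by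
  have hb : (0:ℝ) < 1/t := by positivity
  have h := integral_rpow_mul_exp_neg_mul_rpow (p := 2) (q := (k:ℝ)) two_pos
    (by exact_mod_cast neg_one_lt_zero.trans_le (Nat.cast_nonneg k)) hb
  have heq : ∫ x in Ioi (0:ℝ), x ^ ((k:ℝ)) * Real.exp (-(1/t) * x ^ (2:ℝ))
      = ∫ s in Ioi (0:ℝ), s ^ k * Real.exp (-s^2/t) := by
    refine setIntegral_congr_fun measurableSet_Ioi (fun x hx => ?_)
    rw [Real.rpow_natCast, Real.rpow_two]
    congr 1
    field_simp
  rw [heq] at h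
  rw [h, one_div, Real.inv_rpow ht.le, ← Real.rpow_neg ht.le]
  rw [show -(-((k:ℝ)+1)/2) = ((k:ℝ)+1)/2 by ring]
  ring

lemma onedim (d : ℕ) (hd : 1 ≤ d) : ∃ C : ℝ, 0 < C ∧ ∀ D : ℝ, 0 ≤ D → ∀ t : ℝ, 0 < t →
    ∫ r in Ioi D, r ^ (d-1) * Real.exp (-r^2/t) ≤
      C * Real.sqrt (1+D^2) ^ (d-1) * Real.sqrt (1+t^2) ^ ((d:ℝ)/2) * Real.exp (-D^2/t) := by
  set n := d - 1 with hn
  have hΓd : 0 < Real.Gamma ((d:ℝ)/2) := Real.Gamma_pos_of_pos (by positivity)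
  have hΓ1 : 0 < Real.Gamma (1/2) := Real.Gamma_pos_of_pos (by norm_num)
  refine ⟨2^n * (Real.Gamma ((d:ℝ)/2)/2 + Real.Gamma (1/2)/2), by positivity, ?_⟩
  intro D hD t ht
  have hb : (0:ℝ) < 1/t := by positivity
  have hnd : ((n:ℝ) + 1) = (d:ℝ) := by
    rw [hn]; push_cast [Nat.cast_sub hd]; ring
  -- convenient abbreviations
  set e := fun s : ℝ => Real.exp (-s^2/t) with he
  have hA_int : IntegrableOn (fun s : ℝ => s ^ n * e s) (Ioi 0) := by
    refine ((integrableOn_rpow_mul_exp_neg_mul_sq hb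
      (by exact_mod_cast neg_one_lt_zero.trans_le (Nat.cast_nonneg n) : (-1:ℝ) < (n:ℝ)))).congr_fun
      (fun x hx => ?_) measurableSet_Ioi
    simp only [Real.rpow_natCast, he]
    congr 1
    ring_nf
  have hB_int : IntegrableOn e (Ioi 0) := by
    have := (integrable_exp_neg_mul_sq hb).integrableOn (s := Ioi (0:ℝ))
    refine this.congr_fun (fun x _ => ?_) measurableSet_Ioi
    simp only [he]
    ring_nf
  -- values of the moments
  have hA : ∫ s in Ioi (0:ℝ), s ^ n * e s = t ^ ((d:ℝ)/2) * (Real.Gamma ((d:ℝ)/2) / 2) := by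
    rw [he, gauss_moment n t ht, hnd]
  have hB : ∫ s in Ioi (0:ℝ), e s = t ^ ((1:ℝ)/2) * (Real.Gamma ((1:ℝ)/2) / 2) := by
    have := gauss_moment 0 t ht
    simp only [pow_zero, one_mul, Nat.cast_zero, zero_add] at this
    rw [he]; rw [this]
  -- elementary bounds
  have htle : t ≤ Real.sqrt (1 + t^2) := Real.le_sqrt_of_sq_le (by nlinarith)
  have h1t : (1:ℝ) ≤ Real.sqrt (1 + t^2) := Real.le_sqrt_of_sq_le (by nlinarith)
  have hDle : D ≤ Real.sqrt (1 + D^2) := Real.le_sqrt_of_sq_le (by nlinarith)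
  have h1D : (1:ℝ) ≤ Real.sqrt (1 + D^2) ^ n :=
    one_le_pow₀ (Real.le_sqrt_of_sq_le (by nlinarith))
  have key : ∀ a : ℝ, 0 ≤ a → a ≤ (d:ℝ)/2 → t ^ a ≤ Real.sqrt (1+t^2) ^ ((d:ℝ)/2) :=
    fun a ha had => (Real.rpow_le_rpow ht.le htle ha).trans
      (Real.rpow_le_rpow_of_exponent_le h1t had)
  have hAle : ∫ s in Ioi (0:ℝ), s ^ n * e s
      ≤ (Real.Gamma ((d:ℝ)/2)/2) * Real.sqrt (1+t^2) ^ ((d:ℝ)/2) := by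
    rw [hA, mul_comm]
    exact mul_le_mul_of_nonneg_left (key _ (by positivity) le_rfl) (by positivity)
  have hBle : ∫ s in Ioi (0:ℝ), e s
      ≤ (Real.Gamma ((1:ℝ)/2)/2) * Real.sqrt (1+t^2) ^ ((d:ℝ)/2) := by
    rw [hB, mul_comm]
    refine mul_le_mul_of_nonneg_left (key _ (by norm_num) ?_) (by positivity)
    have : (1:ℝ) ≤ (d:ℝ) := by exact_mod_cast hd
    linarith
  -- the main chain
  calc ∫ r in Ioi D, r ^ n * Real.exp (-r^2/t)
      = ∫ s in Ioi (0:ℝ), (s+D) ^ n * Real.exp (-(s+D)^2/t) :=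
        integral_Ioi_translate _ D
    _ ≤ ∫ s in Ioi (0:ℝ), 2^n * (s ^ n * e s + D ^ n * e s) * Real.exp (-D^2/t) := by
        refine integral_mono_of_nonneg ?_ ?_ ?_
        · filter_upwards [ae_restrict_mem measurableSet_Ioi] with s hs
          have : 0 ≤ s + D := by have := (mem_Ioi.mp hs).le; linarith
          positivity
        · exact (((hA_int.add (hB_int.const_mul (D^n))).const_mul (2^n)).mul_const _)
        · filter_upwards [ae_restrict_mem measurableSet_Ioi] with s hs
          have hs0 : 0 < s := mem_Ioi.mp hs
          have hpow : (s+D) ^ n ≤ 2 ^ n * (s ^ n + D ^ n) := by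
            calc (s+D) ^ n ≤ (2 * max s D) ^ n := by
                  refine pow_le_pow_left₀ (by linarith) ?_ n
                  rcases le_total s D with h | h
                  · rw [max_eq_right h]; linarith
                  · rw [max_eq_left h]; linarith
              _ = 2 ^ n * (max s D) ^ n := mul_pow 2 _ n
              _ ≤ 2 ^ n * (s ^ n + D ^ n) := by
                  refine mul_le_mul_of_nonneg_left ?_ (by positivity)
                  rcases le_total s D with h | h
                  · rw [max_eq_right h]
                    exact le_add_of_nonneg_left (by positivity)
                  · rw [max_eq_left h]
                    exact le_add_of_nonneg_right (by positivity)
          have hexp : Real.exp (-(s+D)^2/t) ≤ e s * Real.exp (-D^2/t) := by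
            rw [he, ← Real.exp_add]
            refine Real.exp_le_exp.mpr ?_
            rw [← add_div]
            gcongr
            nlinarith [mul_nonneg hs0.le hD]
          calc (s+D) ^ n * Real.exp (-(s+D)^2/t)
              ≤ (2 ^ n * (s ^ n + D ^ n)) * (e s * Real.exp (-D^2/t)) := by
                refine mul_le_mul hpow hexp (Real.exp_pos _).le ?_
                positivity
            _ = 2^n * (s ^ n * e s + D ^ n * e s) * Real.exp (-D^2/t) := by ring
    _ = 2^n * ((∫ s in Ioi (0:ℝ), s ^ n * e s) + D^n * ∫ s in Ioi (0:ℝ), e s)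
          * Real.exp (-D^2/t) := by
        rw [show (fun s : ℝ => 2^n * (s ^ n * e s + D ^ n * e s) * Real.exp (-D^2/t))
            = fun s : ℝ => (2^n * Real.exp (-D^2/t)) * (s ^ n * e s + D ^ n * e s) from
          by funext s; ring]
        rw [MeasureTheory.integral_const_mul, integral_add hA_int (hB_int.const_mul _),
          MeasureTheory.integral_const_mul]
        ring
    _ ≤ 2^n * (Real.Gamma ((d:ℝ)/2)/2 + Real.Gamma (1/2)/2)
          * Real.sqrt (1+D^2) ^ n * Real.sqrt (1+t^2) ^ ((d:ℝ)/2) * Real.exp (-D^2/t) := by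
        have hInt0 : 0 ≤ ∫ s in Ioi (0:ℝ), e s :=
          setIntegral_nonneg measurableSet_Ioi (fun s _ => (Real.exp_pos _).le)
        have h2 : D^n * ∫ s in Ioi (0:ℝ), e s
            ≤ Real.sqrt (1+D^2) ^ n * ((Real.Gamma ((1:ℝ)/2)/2) * Real.sqrt (1+t^2) ^ ((d:ℝ)/2)) :=
          mul_le_mul (pow_le_pow_left₀ hD hDle n) hBle hInt0 (by positivity)
        have h1 : (∫ s in Ioi (0:ℝ), s ^ n * e s)
            ≤ Real.sqrt (1+D^2) ^ n * ((Real.Gamma ((d:ℝ)/2)/2) * Real.sqrt (1+t^2) ^ ((d:ℝ)/2)) := by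
          refine hAle.trans ?_
          exact le_mul_of_one_le_left (by positivity) h1D
        refine mul_le_mul_of_nonneg_right ?_ (Real.exp_pos _).le
        calc 2^n * ((∫ s in Ioi (0:ℝ), s ^ n * e s) + D^n * ∫ s in Ioi (0:ℝ), e s)
            ≤ 2^n * (Real.sqrt (1+D^2) ^ n * ((Real.Gamma ((d:ℝ)/2)/2) * Real.sqrt (1+t^2) ^ ((d:ℝ)/2))
              + Real.sqrt (1+D^2) ^ n * ((Real.Gamma ((1:ℝ)/2)/2) * Real.sqrt (1+t^2) ^ ((d:ℝ)/2))) := by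
              refine mul_le_mul_of_nonneg_left (add_le_add h1 h2) (by positivity)
          _ = 2^n * (Real.Gamma ((d:ℝ)/2)/2 + Real.Gamma (1/2)/2)
              * Real.sqrt (1+D^2) ^ n * Real.sqrt (1+t^2) ^ ((d:ℝ)/2) := by ring
    _ = 2^n * (Real.Gamma ((d:ℝ)/2)/2 + Real.Gamma (1/2)/2)
          * Real.sqrt (1+D^2) ^ n * Real.sqrt (1+t^2) ^ ((d:ℝ)/2) * Real.exp (-D^2/t) := rfl

/-- There is `C = C(d) > 0` such that for every closed `E ⊆ ℝ^d`, every `x` and `t > 0`,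
`∫_E e^{-|x-y|²/t} dy ≤ C ⟨dist(x,E)⟩^{d-1} ⟨t⟩^{d/2} e^{-dist(x,E)²/t}`. -/
theorem gaussian_integral_closed_set_bound (d : ℕ) :
    ∃ C : ℝ, 0 < C ∧ ∀ E : Set (EuclideanSpace ℝ (Fin d)), IsClosed E →
      ∀ x : EuclideanSpace ℝ (Fin d), ∀ t : ℝ, 0 < t →
        ∫ y in E, Real.exp (-‖x - y‖ ^ 2 / t) ≤
          C * Real.sqrt (1 + Metric.infDist x E ^ 2) ^ (d - 1) *
            Real.sqrt (1 + t ^ 2) ^ ((d : ℝ) / 2) *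
            Real.exp (-Metric.infDist x E ^ 2 / t) := by
  rcases Nat.eq_zero_or_pos d with hd0 | hd
  · subst hd0
    refine ⟨1, one_pos, ?_⟩
    intro E hE x t ht
    haveI hsub : Subsingleton (EuclideanSpace ℝ (Fin 0)) :=
      ⟨fun a b => by ext i; exact i.elim0⟩
    have hDzero : Metric.infDist x E = 0 := by
      rcases E.eq_empty_or_nonempty with h | h
      · simp [h, Metric.infDist_empty]
      · obtain ⟨y, hy⟩ := h
        rw [Subsingleton.elim x y]
        exact Metric.infDist_zero_of_mem hy
    rw [hDzero]
    have huniv : (volume : Measure (EuclideanSpace ℝ (Fin 0))) univ = 1 := by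
      have h := (EuclideanSpace.volume_preserving_symm_measurableEquiv_toLp (Fin 0)).measure_preimage
        (MeasurableSet.univ (α := Fin 0 → ℝ)).nullMeasurableSet
      have hpi : (volume : Measure (Fin 0 → ℝ)) univ = 1 := by
        rw [volume_pi, Measure.pi_univ]
        simp
      simpa [hpi] using h
    have hLHS : ∫ y in E, Real.exp (-‖x - y‖ ^ 2 / t) = (volume E).toReal := by
      rw [setIntegral_congr_fun hE.measurableSet
        (fun y _ => by rw [Subsingleton.elim (x - y) 0]; simp : ∀ y ∈ E,
          Real.exp (-‖x - y‖ ^ 2 / t) = 1)]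
      simp
      rfl
    rw [hLHS]
    have hle1 : (volume E).toReal ≤ 1 := by
      have hm := measure_mono (μ := (volume : Measure (EuclideanSpace ℝ (Fin 0)))) (subset_univ E)
      rw [huniv] at hm
      calc (volume E).toReal ≤ (1 : ENNReal).toReal :=
            ENNReal.toReal_mono ENNReal.one_ne_top hm
        _ = 1 := by simp
    simpa using hle1
  · obtain ⟨C₁, hC₁, h1⟩ := onedim d hd
    haveI : Nontrivial (EuclideanSpace ℝ (Fin d)) :=
      Module.nontrivial_of_finrank_pos (R := ℝ) (by rw [finrank_euclideanSpace_fin]; exact hd)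
    set c := (volume (Metric.ball (0 : EuclideanSpace ℝ (Fin d)) 1)).toReal with hcdef
    have hc : 0 < c :=
      ENNReal.toReal_pos (Metric.measure_ball_pos volume 0 one_pos).ne' measure_ball_lt_top.ne
    have hd' : (0:ℝ) < d := by exact_mod_cast hd
    refine ⟨(d : ℝ) * c * C₁, by positivity, ?_⟩
    intro E hE x t ht
    set D := Metric.infDist x E with hDdef
    have hD : 0 ≤ D := Metric.infDist_nonneg
    set g : ℝ → ℝ := fun r => (Ici D).indicator (fun r => Real.exp (-r ^ 2 / t)) r with hg
    -- Gaussian integrability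
    have hGauss : Integrable (fun v : EuclideanSpace ℝ (Fin d) => Real.exp (-‖v‖ ^ 2 / t)) := by
      have hbre : (0:ℝ) < ((1/t : ℝ) : ℂ).re := by simpa using (by positivity : (0:ℝ) < 1/t)
      have h := (GaussianFourier.integrable_cexp_neg_mul_sq_norm_add
        (V := EuclideanSpace ℝ (Fin d)) hbre 0 0).norm
      refine h.congr' ?_ ?_
      · exact (Continuous.aestronglyMeasurable (by fun_prop))
      · refine Filter.Eventually.of_forall fun v => ?_
        simp only [zero_mul, add_zero, Complex.norm_exp]
        congr 1
        rw [show -(((1/t:ℝ)):ℂ) * (‖v‖:ℂ) ^ 2 = ((-(1/t) * ‖v‖ ^ 2 : ℝ) : ℂ) by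
          push_cast; ring, Complex.ofReal_re]
        ring
    have hGaussx : Integrable (fun y : EuclideanSpace ℝ (Fin d) =>
        Real.exp (-‖x - y‖ ^ 2 / t)) := by
      have := hGauss.comp_sub_left x
      simpa using this
    have hS : MeasurableSet {y : EuclideanSpace ℝ (Fin d) | D ≤ ‖x - y‖} := by
      apply measurableSet_le measurable_const
      exact (Continuous.norm (continuous_const.sub continuous_id)).measurable
    have hgx : (fun y : EuclideanSpace ℝ (Fin d) => g ‖x - y‖)
        = {y : EuclideanSpace ℝ (Fin d) | D ≤ ‖x - y‖}.indicator
            (fun y => Real.exp (-‖x - y‖ ^ 2 / t)) := by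
      funext y
      by_cases h : D ≤ ‖x - y‖ <;> simp [hg, indicator, h]
    have hIntg : Integrable (fun y : EuclideanSpace ℝ (Fin d) => g ‖x - y‖) := by
      rw [hgx]; exact hGaussx.indicator hS
    have step1 : ∫ y in E, Real.exp (-‖x - y‖ ^ 2 / t) ≤
        ∫ y : EuclideanSpace ℝ (Fin d), g ‖x - y‖ := by
      rw [← integral_indicator hE.measurableSet]
      refine integral_mono_of_nonneg ?_ hIntg ?_
      · exact Filter.Eventually.of_forall fun y =>
          indicator_nonneg (fun y _ => (Real.exp_pos _).le) y
      · refine Filter.Eventually.of_forall fun y => ?_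
        by_cases hy : y ∈ E
        · rw [indicator_of_mem hy]
          have hdist : D ≤ ‖x - y‖ := by
            rw [← dist_eq_norm]
            exact Metric.infDist_le_dist_of_mem hy
          show _ ≤ g ‖x - y‖
          simp only [hg]
          exact le_of_eq (indicator_of_mem (show ‖x - y‖ ∈ Ici D from hdist) (fun r => Real.exp (-r ^ 2 / t))).symm
        · rw [indicator_of_notMem hy]
          show (0:ℝ) ≤ g ‖x - y‖
          simp only [hg]
          exact indicator_nonneg (fun r _ => (Real.exp_pos _).le) _
    have step2 : ∫ y : EuclideanSpace ℝ (Fin d), g ‖x - y‖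
        = ∫ z : EuclideanSpace ℝ (Fin d), g ‖z‖ :=
      integral_sub_left_eq_self (fun z => g ‖z‖) volume x
    have step3 : ∫ z : EuclideanSpace ℝ (Fin d), g ‖z‖
        = d • c • ∫ r in Ioi (0:ℝ), r ^ (d - 1) • g r := by
      rw [MeasureTheory.integral_fun_norm_addHaar volume g, finrank_euclideanSpace_fin]
      rfl
    have step4 : ∫ r in Ioi (0:ℝ), r ^ (d - 1) • g r
        = ∫ r in Ioi D, r ^ (d - 1) * Real.exp (-r ^ 2 / t) := by
      have hptwise : ∀ r : ℝ, r ^ (d - 1) • g r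
          = (Ici D).indicator (fun r => r ^ (d - 1) * Real.exp (-r ^ 2 / t)) r := by
        intro r
        simp only [hg]
        by_cases h : r ∈ Ici D
        · rw [indicator_of_mem h, indicator_of_mem h, smul_eq_mul]
        · rw [indicator_of_notMem h, indicator_of_notMem h, smul_zero]
      simp_rw [hptwise]
      rw [setIntegral_indicator measurableSet_Ici]
      apply setIntegral_congr_set
      rw [MeasureTheory.ae_eq_set]
      constructor
      · refine measure_mono_null (fun r hr => ?_) (Real.volume_singleton (a := D))
        simp only [mem_diff, mem_inter_iff, mem_Ioi, mem_Ici, mem_singleton_iff] at hr ⊢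
        exact le_antisymm (not_lt.mp hr.2) hr.1.2
      · refine measure_mono_null (fun r hr => ?_) (measure_empty (μ := volume))
        simp only [mem_diff, mem_inter_iff, mem_Ioi, mem_Ici] at hr
        exact absurd ⟨lt_of_le_of_lt hD hr.1, hr.1.le⟩ hr.2
    have hI := h1 D hD t ht
    calc ∫ y in E, Real.exp (-‖x - y‖ ^ 2 / t)
        ≤ ∫ y : EuclideanSpace ℝ (Fin d), g ‖x - y‖ := step1
      _ = d • c • ∫ r in Ioi D, r ^ (d - 1) * Real.exp (-r ^ 2 / t) := by
          rw [step2, step3, step4]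
      _ = (d : ℝ) * c * ∫ r in Ioi D, r ^ (d - 1) * Real.exp (-r ^ 2 / t) := by
          simp [nsmul_eq_mul, smul_eq_mul, mul_assoc]
      _ ≤ (d : ℝ) * c * (C₁ * Real.sqrt (1 + D ^ 2) ^ (d - 1) *
            Real.sqrt (1 + t ^ 2) ^ ((d : ℝ) / 2) * Real.exp (-D ^ 2 / t)) := by
          refine mul_le_mul_of_nonneg_left hI (by positivity)
      _ = (d : ℝ) * c * C₁ * Real.sqrt (1 + D ^ 2) ^ (d - 1) *
            Real.sqrt (1 + t ^ 2) ^ ((d : ℝ) / 2) * Real.exp (-D ^ 2 / t) := by ring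
end

section
/- Let f ∈ L^∞(ℝ) be compactly supported. Its Gaussian regularization extends to an entire function f_λ(z) = (λ/(4π))^{1/2} ∫_ℝ f(y) e^{-λ(z-y)²/4} dy, and there is a constant C (depending only on ‖f‖_{L^∞} and the measure of supp f) such that for all λ ≥ 1 and z ∈ ℂ, |f_λ(z)| ≤ C λ^{1/2} e^{(λ/4)(Im z)²} e^{-(λ/4) dist(Re z, supp f)²}. -/
open MeasureTheory Set

/-- Complexified Gaussian regularization of `f : ℝ → ℝ`:
`f_λ(z) = (λ/(4π))^{1/2} ∫ f(y) e^{-λ(z-y)²/4} dy`, where `(z-y)²` is the complex square. -/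
noncomputable def cgreg (f : ℝ → ℝ) (lam : ℝ) (z : ℂ) : ℂ :=
  (Real.sqrt (lam / (4 * Real.pi)) : ℂ) *
    ∫ y : ℝ, (f y : ℂ) * Complex.exp (-(lam : ℂ) * (z - (y : ℂ)) ^ 2 / 4)


lemma re_quad (lam : ℝ) (z : ℂ) (y : ℝ) :
    (-(lam : ℂ) * (z - (y:ℂ)) ^ 2 / 4).re = lam / 4 * z.im ^ 2 - lam / 4 * (z.re - y) ^ 2 := by
  simp [Complex.div_re, Complex.mul_re, Complex.mul_im, Complex.sub_re, Complex.sub_im, pow_two,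
    Complex.normSq]
  ring

lemma norm_integrand (f : ℝ → ℝ) (lam : ℝ) (z : ℂ) (y : ℝ) :
    ‖(f y : ℂ) * Complex.exp (-(lam : ℂ) * (z - (y : ℂ)) ^ 2 / 4)‖
      = |f y| * Real.exp (lam / 4 * z.im ^ 2 - lam / 4 * (z.re - y) ^ 2) := by
  rw [norm_mul, Complex.norm_real, Real.norm_eq_abs, Complex.norm_exp,
    re_quad]

lemma norm_integrand' (f : ℝ → ℝ) (lam : ℝ) (hlam : 0 ≤ lam) (z : ℂ) (y : ℝ) :
    ‖(f y : ℂ) * (Complex.exp (-(lam : ℂ) * (z - (y : ℂ)) ^ 2 / 4) *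
        (-(lam : ℂ) * (z - (y : ℂ)) / 2))‖
      = |f y| * (Real.exp (lam / 4 * z.im ^ 2 - lam / 4 * (z.re - y) ^ 2) *
          (lam * ‖z - (y : ℂ)‖ / 2)) := by
  rw [norm_mul, norm_mul, norm_div, norm_mul, Complex.norm_real, Real.norm_eq_abs,
    Complex.norm_exp, re_quad, norm_neg]
  norm_num
  left
  exact Or.inl hlam

lemma deriv_integrand (f : ℝ → ℝ) (lam : ℝ) (y : ℝ) (z : ℂ) :
    HasDerivAt (fun z : ℂ => (f y : ℂ) * Complex.exp (-(lam : ℂ) * (z - (y : ℂ)) ^ 2 / 4))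
      ((f y : ℂ) * (Complex.exp (-(lam : ℂ) * (z - (y : ℂ)) ^ 2 / 4) *
        (-(lam : ℂ) * (z - (y : ℂ)) / 2))) z := by
  have h1 : HasDerivAt (fun z : ℂ => -(lam : ℂ) * (z - (y:ℂ)) ^ 2 / 4)
      (-(lam : ℂ) * (2 * (z - (y:ℂ)) ^ 1 * 1) / 4) z :=
    ((((hasDerivAt_id z).sub_const (y:ℂ)).pow 2).const_mul (-(lam:ℂ))).div_const 4
  have h2 := (h1.cexp).const_mul (f y : ℂ)
  refine h2.congr_deriv ?_
  ring

lemma meas_integrand (f : ℝ → ℝ) (hf : Measurable f) (lam : ℝ) (z : ℂ) :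
    AEStronglyMeasurable
      (fun y : ℝ => (f y : ℂ) * Complex.exp (-(lam : ℂ) * (z - (y : ℂ)) ^ 2 / 4)) volume := by
  apply Measurable.aestronglyMeasurable
  exact (Complex.measurable_ofReal.comp hf).mul
    (Complex.measurable_exp.comp
      ((measurable_const.mul ((measurable_const.sub Complex.measurable_ofReal).pow_const 2)).div_const 4))

lemma meas_integrand' (f : ℝ → ℝ) (hf : Measurable f) (lam : ℝ) (z : ℂ) :
    AEStronglyMeasurable
      (fun y : ℝ => (f y : ℂ) * (Complex.exp (-(lam : ℂ) * (z - (y : ℂ)) ^ 2 / 4) *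
        (-(lam : ℂ) * (z - (y : ℂ)) / 2))) volume := by
  apply Measurable.aestronglyMeasurable
  exact (Complex.measurable_ofReal.comp hf).mul
    ((Complex.measurable_exp.comp
      ((measurable_const.mul ((measurable_const.sub Complex.measurable_ofReal).pow_const 2)).div_const 4)).mul
      ((measurable_const.mul (measurable_const.sub Complex.measurable_ofReal)).div_const 2))

lemma cgreg_diff_aux (M : ℝ) (hM : 0 < M) (f : ℝ → ℝ) (hf : Measurable f)
    (hfM : ∀ y, |f y| ≤ M) (hcs : HasCompactSupport f) (lam : ℝ) (hlam : 0 < lam) :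
    Differentiable ℂ (fun z : ℂ =>
      ∫ y : ℝ, (f y : ℂ) * Complex.exp (-(lam : ℂ) * (z - (y : ℂ)) ^ 2 / 4)) := by
  have hKmeas : MeasurableSet (tsupport f) := (isClosed_tsupport f).measurableSet
  have hKfin : volume (tsupport f) < ⊤ := hcs.measure_lt_top
  obtain ⟨R, hR⟩ := hcs.isBounded.subset_closedBall 0
  intro z₀
  set B : ℝ := M * (Real.exp (lam / 4 * (|z₀.im| + 1) ^ 2) * (lam * (‖z₀‖ + 1 + R) / 2)) with hB
  have key := hasDerivAt_integral_of_dominated_loc_of_deriv_le (μ := volume)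
    (F := fun (z : ℂ) (y : ℝ) => (f y : ℂ) * Complex.exp (-(lam : ℂ) * (z - (y : ℂ)) ^ 2 / 4))
    (F' := fun (z : ℂ) (y : ℝ) => (f y : ℂ) *
      (Complex.exp (-(lam : ℂ) * (z - (y : ℂ)) ^ 2 / 4) * (-(lam : ℂ) * (z - (y : ℂ)) / 2)))
    (x₀ := z₀) (bound := (tsupport f).indicator fun _ => B)
    (s := Metric.ball z₀ 1) (Metric.ball_mem_nhds z₀ one_pos)
    (Filter.Eventually.of_forall fun z => meas_integrand f hf lam z)
    ?hint (meas_integrand' f hf lam z₀) ?hbd ?hbi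
    (Filter.Eventually.of_forall fun y => fun z _ => deriv_integrand f lam y z)
  · exact key.2.differentiableAt
  case hint =>
    apply Integrable.mono' (g := (tsupport f).indicator fun _ => M * Real.exp (lam / 4 * z₀.im ^ 2))
    · rw [integrable_indicator_iff hKmeas]
      exact integrableOn_const hKfin.ne
    · exact meas_integrand f hf lam z₀
    · refine Filter.Eventually.of_forall fun y => ?_
      rw [norm_integrand]
      by_cases hy : y ∈ tsupport f
      · rw [indicator_of_mem hy]
        refine mul_le_mul (hfM y) (Real.exp_le_exp.2 ?_) (Real.exp_pos _).le hM.le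
        nlinarith [sq_nonneg (z₀.re - y), hlam.le]
      · rw [indicator_of_notMem hy, image_eq_zero_of_notMem_tsupport hy]
        simp
  case hbd =>
    refine Filter.Eventually.of_forall fun y => fun z hz => ?_
    rw [norm_integrand' f lam hlam.le]
    by_cases hy : y ∈ tsupport f
    · rw [indicator_of_mem hy]
      have hyR : |y| ≤ R := by
        have := hR hy
        simpa [Real.dist_eq] using this
      have him : |z.im| ≤ |z₀.im| + 1 := by
        have h1 : |z.im - z₀.im| ≤ ‖z - z₀‖ := by
          have := Complex.abs_im_le_norm (z - z₀)
          simpa [Complex.sub_im] using this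
        have h2 : ‖z - z₀‖ < 1 := by simpa [Metric.mem_ball, dist_eq_norm] using hz
        have h3 : |z.im| - |z₀.im| ≤ |z.im - z₀.im| := abs_sub_abs_le_abs_sub _ _
        linarith
      have hexp : Real.exp (lam / 4 * z.im ^ 2 - lam / 4 * (z.re - y) ^ 2)
          ≤ Real.exp (lam / 4 * (|z₀.im| + 1) ^ 2) := by
        apply Real.exp_le_exp.2
        have h3 : z.im ^ 2 ≤ (|z₀.im| + 1) ^ 2 := by
          have := sq_abs z.im
          nlinarith [abs_nonneg z.im, abs_nonneg z₀.im]
        nlinarith [sq_nonneg (z.re - y), hlam.le]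
      have hzy : ‖z - (y:ℂ)‖ ≤ ‖z₀‖ + 1 + R := by
        have h2 : ‖z - z₀‖ < 1 := by simpa [Metric.mem_ball, dist_eq_norm] using hz
        calc ‖z - (y:ℂ)‖ = ‖(z - z₀) + (z₀ - (y:ℂ))‖ := by ring_nf
          _ ≤ ‖z - z₀‖ + ‖z₀ - (y:ℂ)‖ := norm_add_le _ _
          _ ≤ ‖z - z₀‖ + (‖z₀‖ + ‖(y:ℂ)‖) := by
              have := norm_sub_le z₀ ((y:ℂ)); linarith
          _ ≤ 1 + (‖z₀‖ + R) := by
              have : ‖(y:ℂ)‖ = |y| := by simp [Complex.norm_real]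
              linarith [hyR]
          _ = ‖z₀‖ + 1 + R := by ring
      rw [hB]
      have hR0 : (0:ℝ) ≤ ‖z₀‖ + 1 + R := le_trans (norm_nonneg _) (by linarith [hzy, norm_nonneg (z - (y:ℂ))])
      refine mul_le_mul (hfM y) ?_ (by positivity) hM.le
      refine mul_le_mul hexp ?_ (by positivity) (Real.exp_pos _).le
      have := mul_le_mul_of_nonneg_left hzy hlam.le
      linarith
    · rw [indicator_of_notMem hy, image_eq_zero_of_notMem_tsupport hy]
      simp
  case hbi =>
    rw [integrable_indicator_iff hKmeas]
    exact integrableOn_const hKfin.ne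

/-- For compactly supported bounded `f`, the complexified Gaussian regularization is entire,
and there is `C` (depending only on the sup bound and on the measure of the support) with
`|f_λ(z)| ≤ C λ^{1/2} e^{(λ/4)(Im z)²} e^{-(λ/4) dist(Re z, supp f)²}` for `λ ≥ 1`. -/
theorem cgreg_entire_and_bound (M A : ℝ) (hM : 0 < M) (hA : 0 < A) :
    ∃ C : ℝ, 0 < C ∧ ∀ f : ℝ → ℝ, Measurable f → (∀ y, |f y| ≤ M) →
      HasCompactSupport f → volume (tsupport f) ≤ ENNReal.ofReal A →
      ∀ lam : ℝ, 1 ≤ lam →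
        Differentiable ℂ (cgreg f lam) ∧
        ∀ z : ℂ, ‖cgreg f lam z‖ ≤
          C * Real.sqrt lam * Real.exp (lam / 4 * z.im ^ 2) *
            Real.exp (-(lam / 4) * Metric.infDist z.re (tsupport f) ^ 2) := by
  refine ⟨M * A, mul_pos hM hA, ?_⟩
  intro f hf hfM hcs hvol lam hlam
  have hlam0 : (0:ℝ) < lam := lt_of_lt_of_le one_pos hlam
  have hKmeas : MeasurableSet (tsupport f) := (isClosed_tsupport f).measurableSet
  have hKfin : volume (tsupport f) < ⊤ := hcs.measure_lt_top
  have hvolA : (volume (tsupport f)).toReal ≤ A := by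
    have := ENNReal.toReal_mono (by simp) hvol
    simpa [ENNReal.toReal_ofReal hA.le] using this
  refine ⟨?_, fun z => ?_⟩
  · have := cgreg_diff_aux M hM f hf hfM hcs lam hlam0
    unfold cgreg
    exact this.const_mul _
  unfold cgreg
  -- bound on the integrand
  set d : ℝ := Metric.infDist z.re (tsupport f) with hd
  have hd0 : 0 ≤ d := Metric.infDist_nonneg
  set c : ℝ := M * Real.exp (lam / 4 * z.im ^ 2 - lam / 4 * d ^ 2) with hc
  have hc0 : 0 ≤ c := mul_nonneg hM.le (Real.exp_pos _).le
  have hbound : ∀ y : ℝ,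
      ‖(f y : ℂ) * Complex.exp (-(lam : ℂ) * (z - (y : ℂ)) ^ 2 / 4)‖
        ≤ (tsupport f).indicator (fun _ => c) y := by
    intro y
    rw [norm_integrand]
    by_cases hy : y ∈ tsupport f
    · rw [indicator_of_mem hy]
      have h1 : d ≤ |z.re - y| := by
        rw [← Real.dist_eq]
        exact Metric.infDist_le_dist_of_mem hy
      have h2 : d ^ 2 ≤ (z.re - y) ^ 2 := by
        calc d ^ 2 ≤ |z.re - y| ^ 2 := pow_le_pow_left₀ hd0 h1 2
          _ = (z.re - y) ^ 2 := sq_abs _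
      exact mul_le_mul (hfM y) (Real.exp_le_exp.2 (by nlinarith)) (Real.exp_pos _).le hM.le
    · rw [indicator_of_notMem hy, image_eq_zero_of_notMem_tsupport hy]
      simp [hc0]
  have hind : Integrable ((tsupport f).indicator (fun _ => c)) volume := by
    rw [integrable_indicator_iff hKmeas]
    exact integrableOn_const hKfin.ne
  have hle : ‖∫ y : ℝ, (f y : ℂ) * Complex.exp (-(lam : ℂ) * (z - (y : ℂ)) ^ 2 / 4)‖
      ≤ c * (volume (tsupport f)).toReal := by
    calc ‖∫ y : ℝ, (f y : ℂ) * Complex.exp (-(lam : ℂ) * (z - (y : ℂ)) ^ 2 / 4)‖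
        ≤ ∫ y : ℝ, (tsupport f).indicator (fun _ => c) y :=
          norm_integral_le_of_norm_le hind (Filter.Eventually.of_forall hbound)
      _ = c * (volume (tsupport f)).toReal := by
          rw [integral_indicator_const _ hKmeas]; simp [mul_comm, Measure.real]
  rw [norm_mul, Complex.norm_real, Real.norm_eq_abs,
    abs_of_nonneg (Real.sqrt_nonneg _)]
  have hsq : Real.sqrt (lam / (4 * Real.pi)) ≤ Real.sqrt lam := by
    apply Real.sqrt_le_sqrt
    apply div_le_self hlam0.le
    nlinarith [Real.pi_gt_three]
  calc Real.sqrt (lam / (4 * Real.pi)) *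
        ‖∫ y : ℝ, (f y : ℂ) * Complex.exp (-(lam : ℂ) * (z - (y : ℂ)) ^ 2 / 4)‖
      ≤ Real.sqrt lam * (c * (volume (tsupport f)).toReal) := by
        apply mul_le_mul hsq hle (norm_nonneg _) (Real.sqrt_nonneg _)
    _ ≤ M * A * Real.sqrt lam * Real.exp (lam / 4 * z.im ^ 2) *
          Real.exp (-(lam / 4) * d ^ 2) := by
        have h1 : Real.exp (lam / 4 * z.im ^ 2 - lam / 4 * d ^ 2)
            = Real.exp (lam / 4 * z.im ^ 2) * Real.exp (-(lam / 4) * d ^ 2) := by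
          rw [← Real.exp_add]; ring_nf
        rw [hc, h1]
        nlinarith [mul_le_mul_of_nonneg_left hvolA (show (0:ℝ) ≤ Real.sqrt lam *
          (M * (Real.exp (lam / 4 * z.im ^ 2) * Real.exp (-(lam / 4) * d ^ 2))) by positivity)]
end

section
/- There is a universal constant C > 0 such that for every D ∈ ℝ, every χ ∈ L^∞(ℝ) with supp χ ⊆ (-∞, D], every λ ≥ 1, τ > 0 and every z ∈ ℂ, one has |e^{τz} χ_λ(z)| ≤ C ‖χ‖_{L^∞} ⟨λ⟩^{1/2} e^{(λ/4)(Im z)²} e^{Dτ} e^{τ²/λ}, where χ_λ(z) = (λ/(4π))^{1/2} ∫_ℝ χ(y) e^{-λ(z-y)²/4} dy is the (complexified) Gaussian regularization of χ. -/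
open MeasureTheory Set

/-- There is a universal constant `C > 0` such that for every `D ∈ ℝ`, every bounded
measurable `χ` with `supp χ ⊆ (-∞, D]`, every `λ ≥ 1`, `τ > 0` and every `z ∈ ℂ`,
`|e^{τz} χ_λ(z)| ≤ C ‖χ‖_{L^∞} ⟨λ⟩^{1/2} e^{(λ/4)(Im z)²} e^{Dτ} e^{τ²/λ}`. -/
theorem exp_cgreg_bound :
    ∃ C : ℝ, 0 < C ∧ ∀ (D : ℝ) (χ : ℝ → ℝ), Measurable χ →
      ∀ M : ℝ, (∀ y, |χ y| ≤ M) → (∀ y, χ y ≠ 0 → y ≤ D) →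
      ∀ lam τ : ℝ, 1 ≤ lam → 0 < τ → ∀ z : ℂ,
        ‖Complex.exp ((τ : ℂ) * z) * cgreg χ lam z‖ ≤
          C * M * Real.sqrt (Real.sqrt (1 + lam ^ 2)) *
            Real.exp (lam / 4 * z.im ^ 2) * Real.exp (D * τ) * Real.exp (τ ^ 2 / lam) := by
  refine ⟨1, one_pos, ?_⟩
  intro D χ hχ M hM hsupp lam τ hlam hτ z
  have hM0 : 0 ≤ M := le_trans (abs_nonneg _) (hM 0)
  have hlam0 : (0:ℝ) < lam := lt_of_lt_of_le one_pos hlam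
  set x := z.re with hx
  set b := z.im with hb
  set a := x - 2*τ/lam with ha
  set K := M * Real.exp (lam/4 * b^2) * Real.exp (D*τ) * Real.exp (τ^2/lam) with hKdef
  -- rewrite the LHS as a constant times a single integral
  have hre : ∀ y : ℝ, ((τ:ℂ) * z + -(lam : ℂ) * (z - (y : ℂ)) ^ 2 / 4).re
      = τ * x + (-(lam/4) * ((x - y)^2 - b^2)) := by
    intro y
    have h1 : -(lam : ℂ) * (z - (y : ℂ)) ^ 2 / 4 = ((-(lam/4) : ℝ) : ℂ) * (z - (y:ℂ))^2 := by
      push_cast; ring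
    have h2 : ((z - (y:ℂ))^2).re = (x - y)^2 - b^2 := by
      simp [pow_two, Complex.mul_re, hx, hb]
    rw [Complex.add_re, h1]
    simp only [Complex.re_ofReal_mul, h2, Complex.mul_re, Complex.ofReal_re, Complex.ofReal_im]
    simp [hx]
  -- pointwise bound
  have key : ∀ y : ℝ,
      ‖Complex.exp ((τ:ℂ)*z) * ((χ y : ℂ) * Complex.exp (-(lam : ℂ) * (z - (y : ℂ)) ^ 2 / 4))‖
        ≤ K * Real.exp (-(lam/4) * (y - a)^2) := by
    intro y
    have hnorm : ‖Complex.exp ((τ:ℂ)*z) * ((χ y : ℂ) * Complex.exp (-(lam : ℂ) * (z - (y : ℂ)) ^ 2 / 4))‖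
        = |χ y| * Real.exp (τ * x + (-(lam/4) * ((x - y)^2 - b^2))) := by
      rw [show Complex.exp ((τ:ℂ)*z) * ((χ y : ℂ) * Complex.exp (-(lam : ℂ) * (z - (y : ℂ)) ^ 2 / 4))
          = (χ y : ℂ) * Complex.exp ((τ:ℂ)*z + -(lam : ℂ) * (z - (y : ℂ)) ^ 2 / 4) by
        rw [Complex.exp_add]; ring]
      rw [norm_mul, Complex.norm_real, Real.norm_eq_abs,
        Complex.norm_exp, hre y]
    rw [hnorm]
    by_cases hzero : χ y = 0
    · simp only [hzero, abs_zero, zero_mul]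
      positivity
    · have hyD : y ≤ D := hsupp y hzero
      have hexp : τ * x + (-(lam/4) * ((x - y)^2 - b^2))
          ≤ lam/4 * b^2 + D*τ + τ^2/lam + (-(lam/4) * (y - a)^2) := by
        have hid : τ * x + (-(lam/4) * ((x - y)^2 - b^2))
            = τ*y + lam/4 * b^2 + τ^2/lam + (-(lam/4) * (y - a)^2) := by
          rw [ha]; field_simp; ring
        rw [hid]
        nlinarith [mul_nonneg hτ.le (sub_nonneg.2 hyD)]
      calc |χ y| * Real.exp (τ * x + (-(lam/4) * ((x - y)^2 - b^2)))
          ≤ M * Real.exp (lam/4 * b^2 + D*τ + τ^2/lam + (-(lam/4) * (y - a)^2)) := by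
            apply mul_le_mul (hM y) (Real.exp_le_exp.2 hexp) (Real.exp_pos _).le hM0
        _ = K * Real.exp (-(lam/4) * (y - a)^2) := by
            rw [hKdef, Real.exp_add, Real.exp_add, Real.exp_add]; ring
  -- integrability of the majorant
  have hmaj : Integrable (fun y : ℝ => K * Real.exp (-(lam/4) * (y - a)^2)) := by
    have := (integrable_exp_neg_mul_sq (by positivity : (0:ℝ) < lam/4)).comp_sub_right a
    exact this.const_mul K
  have hK0 : 0 ≤ K := by positivity
  -- put exp(τz) inside the integral
  have hLHS : Complex.exp ((τ:ℂ)*z) * cgreg χ lam z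
      = (Real.sqrt (lam / (4 * Real.pi)) : ℂ) *
        ∫ y : ℝ, Complex.exp ((τ:ℂ)*z) * ((χ y : ℂ) * Complex.exp (-(lam : ℂ) * (z - (y : ℂ)) ^ 2 / 4)) := by
    rw [cgreg, integral_const_mul]; ring
  have hnormint : ‖∫ y : ℝ, Complex.exp ((τ:ℂ)*z) * ((χ y : ℂ) * Complex.exp (-(lam : ℂ) * (z - (y : ℂ)) ^ 2 / 4))‖
      ≤ ∫ y : ℝ, K * Real.exp (-(lam/4) * (y - a)^2) := by
    exact norm_integral_le_of_norm_le hmaj (Filter.Eventually.of_forall key)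
  have hgauss : ∫ y : ℝ, K * Real.exp (-(lam/4) * (y - a)^2)
      = K * Real.sqrt (Real.pi / (lam/4)) := by
    rw [integral_const_mul]
    congr 1
    rw [show (fun y : ℝ => Real.exp (-(lam/4) * (y - a)^2)) = fun y => (fun t => Real.exp (-(lam/4) * t^2)) (y - a) from rfl]
    rw [integral_sub_right_eq_self (fun t => Real.exp (-(lam/4) * t^2)) a]
    exact integral_gaussian (lam/4)
  have hsqrt : Real.sqrt (lam / (4 * Real.pi)) * Real.sqrt (Real.pi / (lam/4)) = 1 := by
    rw [← Real.sqrt_mul (by positivity)]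
    rw [show lam / (4 * Real.pi) * (Real.pi / (lam/4)) = 1 by
      field_simp]
    exact Real.sqrt_one
  have hbound : ‖Complex.exp ((τ:ℂ)*z) * cgreg χ lam z‖ ≤ K := by
    rw [hLHS, norm_mul, Complex.norm_real, Real.norm_eq_abs,
      abs_of_nonneg (Real.sqrt_nonneg _)]
    calc Real.sqrt (lam / (4 * Real.pi)) * ‖∫ y : ℝ, Complex.exp ((τ:ℂ)*z) * ((χ y : ℂ) * Complex.exp (-(lam : ℂ) * (z - (y : ℂ)) ^ 2 / 4))‖
        ≤ Real.sqrt (lam / (4 * Real.pi)) * (K * Real.sqrt (Real.pi / (lam/4))) := by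
          apply mul_le_mul_of_nonneg_left _ (Real.sqrt_nonneg _)
          rw [← hgauss]; exact hnormint
      _ = K * (Real.sqrt (lam / (4 * Real.pi)) * Real.sqrt (Real.pi / (lam/4))) := by ring
      _ = K := by rw [hsqrt, mul_one]
  -- conclude
  have hs : 1 ≤ Real.sqrt (Real.sqrt (1 + lam ^ 2)) := by
    have h1 : (1:ℝ) ≤ Real.sqrt (1 + lam ^ 2) := by
      calc (1:ℝ) = Real.sqrt 1 := Real.sqrt_one.symm
        _ ≤ _ := Real.sqrt_le_sqrt (by nlinarith)
    calc (1:ℝ) = Real.sqrt 1 := Real.sqrt_one.symm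
      _ ≤ _ := Real.sqrt_le_sqrt h1
  refine hbound.trans ?_
  rw [hKdef, one_mul]
  have h1 : M * Real.exp (lam/4 * b^2) ≤ M * Real.sqrt (Real.sqrt (1 + lam ^ 2)) * Real.exp (lam/4 * b^2) :=
    mul_le_mul_of_nonneg_right (le_mul_of_one_le_right hM0 hs) (Real.exp_pos _).le
  have h2 := mul_le_mul_of_nonneg_right h1 (Real.exp_pos (D*τ)).le
  have h3 := mul_le_mul_of_nonneg_right h2 (Real.exp_pos (τ^2/lam)).le
  exact h3
end

section
/- Let K be a compact topological space and f, g, h : K → ℝ continuous, with f ≥ 0 on K and g > 0 on the zero set {f = 0}. Then there exist A₀ > 0 and C > 0 such that for all A ≥ A₀, g + A f - (1/A) h ≥ C on K. -/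
/-- Compactness lemma: if `f ≥ 0` on a compact `K` and `g > 0` on `{f = 0}`, then there are
`A₀, C > 0` such that `g + A f - (1/A) h ≥ C` on `K` for all `A ≥ A₀`. -/
theorem compactness_fgh {K : Type*} [TopologicalSpace K] [CompactSpace K]
    (f g h : K → ℝ) (hf : Continuous f) (hg : Continuous g) (hh : Continuous h)
    (hf0 : ∀ x, 0 ≤ f x) (hgpos : ∀ x, f x = 0 → 0 < g x) :
    ∃ A₀ C : ℝ, 0 < A₀ ∧ 0 < C ∧
      ∀ A : ℝ, A₀ ≤ A → ∀ x, C ≤ g x + A * f x - (1 / A) * h x := by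
  by_cases hK : Nonempty K
  · -- bound B on |g| and |h|
    obtain ⟨xB, -, hxB⟩ := isCompact_univ.exists_isMaxOn (Set.univ_nonempty)
      ((hg.abs.add hh.abs).continuousOn)
    set B := |g xB| + |h xB| with hBdef
    have hB0 : 0 ≤ B := by positivity
    have hBg : ∀ x, |g x| ≤ B := fun x =>
      le_trans (le_add_of_nonneg_right (abs_nonneg _)) (hxB (Set.mem_univ x))
    have hBh : ∀ x, |h x| ≤ B := fun x =>
      le_trans (le_add_of_nonneg_left (abs_nonneg _)) (hxB (Set.mem_univ x))
    -- ε > 0 lower bound for g on the zero set of f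
    obtain ⟨ε, hε, hεg⟩ : ∃ ε : ℝ, 0 < ε ∧ ∀ x, f x = 0 → ε ≤ g x := by
      by_cases hS : (f ⁻¹' {0}).Nonempty
      · obtain ⟨x0, hx0S, hx0⟩ := ((isClosed_singleton.preimage hf).isCompact).exists_isMinOn
          hS hg.continuousOn
        exact ⟨g x0, hgpos x0 hx0S, fun x hx => hx0 hx⟩
      · exact ⟨1, one_pos, fun x hx => absurd ⟨x, hx⟩ hS⟩
    -- δ > 0 lower bound for f where g ≤ ε/2
    obtain ⟨δ, hδ, hδf⟩ : ∃ δ : ℝ, 0 < δ ∧ ∀ x, g x ≤ ε / 2 → δ ≤ f x := by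
      by_cases hT : {x | g x ≤ ε / 2}.Nonempty
      · obtain ⟨x1, hx1T, hx1⟩ := ((isClosed_le hg continuous_const).isCompact).exists_isMinOn
          hT hf.continuousOn
        refine ⟨f x1, ?_, fun x hx => hx1 hx⟩
        rcases lt_or_eq_of_le (hf0 x1) with hlt | heq
        · exact hlt
        · exact absurd (le_trans (hεg x1 heq.symm) hx1T) (by linarith)
      · exact ⟨1, one_pos, fun x hx => absurd ⟨x, hx⟩ hT⟩
    refine ⟨max 1 (max ((4 * B + 4) / ε) ((2 * B + 1) / δ)), min (ε / 4) 1,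
      lt_of_lt_of_le one_pos (le_max_left _ _), lt_min (by linarith) one_pos, ?_⟩
    intro A hA x
    have hA1 : (1 : ℝ) ≤ A := le_trans (le_max_left _ _) hA
    have hApos : (0 : ℝ) < A := by linarith
    have hinvpos : (0 : ℝ) < 1 / A := by positivity
    have hinv : A * (1 / A) = 1 := by field_simp
    have hAε : 4 * B + 4 ≤ A * ε := by
      rw [← div_le_iff₀ hε]
      calc (4 * B + 4) / ε ≤ max ((4 * B + 4) / ε) ((2 * B + 1) / δ) := le_max_left _ _
        _ ≤ A := le_trans (le_max_right _ _) hA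
    have hAδ : 2 * B + 1 ≤ A * δ := by
      rw [← div_le_iff₀ hδ]
      calc (2 * B + 1) / δ ≤ max ((4 * B + 4) / ε) ((2 * B + 1) / δ) := le_max_right _ _
        _ ≤ A := le_trans (le_max_right _ _) hA
    have hgx := abs_le.mp (hBg x)
    have hhx := abs_le.mp (hBh x)
    by_cases hcase : g x ≤ ε / 2
    · -- far from zero set: f x ≥ δ
      have hfx := hδf x hcase
      refine le_trans (min_le_right _ _) ?_
      have h1 : A * δ ≤ A * f x := mul_le_mul_of_nonneg_left hfx (le_of_lt hApos)
      have h2 : (1 / A) * h x ≤ (1 / A) * B := mul_le_mul_of_nonneg_left hhx.2 (le_of_lt hinvpos)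
      have h3 : (1 / A) * B ≤ B := by
        have : 1 / A ≤ 1 := by rw [div_le_one hApos]; exact hA1
        nlinarith
      linarith [hgx.1]
    · -- g x > ε/2
      push_neg at hcase
      refine le_trans (min_le_left _ _) ?_
      have h2 : (1 / A) * h x ≤ (1 / A) * B := mul_le_mul_of_nonneg_left hhx.2 (le_of_lt hinvpos)
      have h3 : (1 / A) * B ≤ ε / 4 := by
        have := mul_le_mul_of_nonneg_left hAε (le_of_lt hinvpos)
        nlinarith
      have h4 : 0 ≤ A * f x := mul_nonneg (le_of_lt hApos) (hf0 x)
      linarith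
  · exact ⟨1, 1, one_pos, one_pos, fun A hA x => absurd ⟨x⟩ hK⟩
end

section
/- Let C₁, C₂, α > 0. There exists K > 0 such that for every μ₀ > 0 and all a, b, c > 0 satisfying b ≤ C₂ c, a ≤ c, and a ≤ e^{C₁ μ} b + μ^{-α} c for all μ ≥ μ₀, one has a ≤ D₁ c / (log(c/b + 1))^α with D₁ = (2C₁)^α max{K, μ₀^α}. -/
open Real

/-- For `x > 0`, `x ^ α ≤ M * exp (x/2)` for a constant `M ≥ 1` depending only on `α`. -/
lemma rpow_le_const_mul_exp_half (α : ℝ) (hα : 0 < α) :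
    ∃ M : ℝ, 1 ≤ M ∧ ∀ x : ℝ, 0 < x → x ^ α ≤ M * Real.exp (x / 2) := by
  set n : ℕ := ⌈α⌉₊
  refine ⟨(n.factorial : ℝ) * 2 ^ n, ?_, ?_⟩
  · have h1 : (1 : ℝ) ≤ (n.factorial : ℝ) := by exact_mod_cast Nat.one_le_iff_ne_zero.mpr n.factorial_ne_zero
    have h2 : (1 : ℝ) ≤ 2 ^ n := one_le_pow₀ (by norm_num)
    nlinarith
  · intro x hx
    have hexp : (1 : ℝ) ≤ Real.exp (x / 2) := by
      rw [Real.one_le_exp_iff]; positivity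
    have hM : (1 : ℝ) ≤ (n.factorial : ℝ) * 2 ^ n := by
      have h1 : (1 : ℝ) ≤ (n.factorial : ℝ) := by exact_mod_cast Nat.one_le_iff_ne_zero.mpr n.factorial_ne_zero
      have h2 : (1 : ℝ) ≤ 2 ^ n := one_le_pow₀ (by norm_num)
      nlinarith
    rcases le_or_gt x 1 with hx1 | hx1
    · have : x ^ α ≤ 1 := Real.rpow_le_one hx.le hx1 hα.le
      nlinarith
    · have hαn : α ≤ (n : ℕ) := Nat.le_ceil α
      have h1 : x ^ α ≤ x ^ (n : ℝ) :=
        Real.rpow_le_rpow_of_exponent_le hx1.le (by exact_mod_cast hαn)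
      rw [Real.rpow_natCast] at h1
      have h2 : (x / 2) ^ n / n.factorial ≤ Real.exp (x / 2) :=
        Real.pow_div_factorial_le_exp _ (by positivity) n
      have hfac : (0 : ℝ) < (n.factorial : ℝ) := by exact_mod_cast n.factorial_pos
      have h3 : x ^ n = (x / 2) ^ n * 2 ^ n := by
        rw [div_pow]; field_simp
      calc x ^ α ≤ x ^ n := h1
        _ = (x / 2) ^ n * 2 ^ n := h3
        _ ≤ (Real.exp (x / 2) * n.factorial) * 2 ^ n := by
            have := (div_le_iff₀ hfac).mp h2
            nlinarith [pow_pos (by norm_num : (0:ℝ) < 2) n]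
        _ = (n.factorial : ℝ) * 2 ^ n * Real.exp (x / 2) := by ring

/-- Optimization lemma, logarithmic-stability conclusion: if `b ≤ C₂ c`, `a ≤ c`, and
`a ≤ e^{C₁ μ} b + μ^{-α} c` for all `μ ≥ μ₀`, then
`a ≤ D₁ c / (log(c/b + 1))^α` with `D₁ = (2C₁)^α max{K, μ₀^α}`. -/
theorem log_stability (C₁ C₂ α : ℝ) (hC₁ : 0 < C₁) (hC₂ : 0 < C₂) (hα : 0 < α) :
    ∃ K : ℝ, 0 < K ∧ ∀ μ₀ : ℝ, 0 < μ₀ → ∀ a b c : ℝ, 0 < a → 0 < b → 0 < c →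
      b ≤ C₂ * c → a ≤ c →
      (∀ μ : ℝ, μ₀ ≤ μ → a ≤ Real.exp (C₁ * μ) * b + μ ^ (-α) * c) →
      a ≤ (2 * C₁) ^ α * max K (μ₀ ^ α) * c / Real.log (c / b + 1) ^ α := by
  obtain ⟨M, hM1, hM⟩ := rpow_le_const_mul_exp_half α hα
  have h2C₁ : (0 : ℝ) < 2 * C₁ := by linarith
  have hpow : (0 : ℝ) < (2 * C₁) ^ α := Real.rpow_pos_of_pos h2C₁ α
  refine ⟨M * (C₂ + 1) / (2 * C₁) ^ α + 1, by positivity, ?_⟩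
  intro μ₀ hμ₀ a b c ha hb hc hbc hac h
  set K : ℝ := M * (C₂ + 1) / (2 * C₁) ^ α + 1 with hK
  set L : ℝ := Real.log (c / b + 1) with hLdef
  have hcb : (0 : ℝ) < c / b := div_pos hc hb
  have hL : 0 < L := Real.log_pos (by linarith)
  have hexpL : Real.exp L = c / b + 1 := Real.exp_log (by linarith)
  have hLα : (0 : ℝ) < L ^ α := Real.rpow_pos_of_pos hL α
  have hmax : K ≤ max K (μ₀ ^ α) := le_max_left _ _
  rcases le_or_gt μ₀ (L / (2 * C₁)) with hμ | hμ
  · -- main case: use μ = L / (2C₁)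
    have hμpos : 0 < L / (2 * C₁) := div_pos hL h2C₁
    have key := h (L / (2 * C₁)) hμ
    have e1 : C₁ * (L / (2 * C₁)) = L / 2 := by field_simp
    have e2 : (L / (2 * C₁)) ^ (-α) = (2 * C₁) ^ α / L ^ α := by
      rw [Real.rpow_neg hμpos.le, Real.div_rpow hL.le h2C₁.le]
      rw [inv_div]
    rw [e1, e2] at key
    -- bound exp(L/2) * b
    have hcb' : c = b * (Real.exp L - 1) := by
      have : Real.exp L - 1 = c / b := by rw [hexpL]; ring
      rw [this]; field_simp
    have hLM : L ^ α ≤ M * Real.exp (L / 2) := hM L hL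
    have hexpLge : 1 + 1 / C₂ ≤ Real.exp L := by
      rw [hexpL]
      have : 1 / C₂ ≤ c / b := by
        rw [div_le_div_iff₀ hC₂ hb]; linarith
      linarith
    have hCe : Real.exp L ≤ (C₂ + 1) * (Real.exp L - 1) := by
      have h1 : 1 + 1 / C₂ ≤ Real.exp L := hexpLge
      have : C₂ + 1 ≤ C₂ * Real.exp L := by
        have := (div_le_iff₀ hC₂).mp (by linarith : 1 / C₂ ≤ Real.exp L - 1)
        nlinarith
      nlinarith
    have hbbound : Real.exp (L / 2) * b ≤ M * (C₂ + 1) * c / L ^ α := by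
      rw [le_div_iff₀ hLα]
      have hexp2 : Real.exp (L / 2) * Real.exp (L / 2) = Real.exp L := by
        rw [← Real.exp_add]; ring_nf
      have hehalf : 0 < Real.exp (L / 2) := Real.exp_pos _
      calc Real.exp (L / 2) * b * L ^ α
          ≤ Real.exp (L / 2) * b * (M * Real.exp (L / 2)) := by
            apply mul_le_mul_of_nonneg_left hLM (by positivity)
        _ = M * Real.exp L * b := by rw [← hexp2]; ring
        _ ≤ M * ((C₂ + 1) * (Real.exp L - 1)) * b := by
            apply mul_le_mul_of_nonneg_right _ hb.le
            have hM0 : 0 ≤ M := by linarith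
            exact mul_le_mul_of_nonneg_left hCe hM0
        _ = M * (C₂ + 1) * c := by rw [hcb']; ring
    have : a ≤ M * (C₂ + 1) * c / L ^ α + (2 * C₁) ^ α / L ^ α * c := by
      calc a ≤ Real.exp (C₁ * (L / (2 * C₁))) * b + (2 * C₁) ^ α / L ^ α * c := by
            rw [e1]; exact key
        _ ≤ M * (C₂ + 1) * c / L ^ α + (2 * C₁) ^ α / L ^ α * c := by
            rw [e1]; linarith [hbbound]
    have hKc : M * (C₂ + 1) * c / L ^ α + (2 * C₁) ^ α / L ^ α * c
        = (2 * C₁) ^ α * K * c / L ^ α := by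
      rw [hK]; field_simp
    have hfinal : a ≤ (2 * C₁) ^ α * K * c / L ^ α := by rw [← hKc]; exact this
    calc a ≤ (2 * C₁) ^ α * K * c / L ^ α := hfinal
      _ ≤ (2 * C₁) ^ α * max K (μ₀ ^ α) * c / L ^ α := by
          gcongr
  · -- easy case: L < 2 C₁ μ₀
    have hLlt : L < 2 * C₁ * μ₀ := by
      rw [div_lt_iff₀ h2C₁] at hμ; linarith
    have h1 : L ^ α ≤ (2 * C₁ * μ₀) ^ α :=
      Real.rpow_le_rpow hL.le hLlt.le hα.le
    have h2 : (2 * C₁ * μ₀) ^ α = (2 * C₁) ^ α * μ₀ ^ α :=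
      Real.mul_rpow h2C₁.le hμ₀.le
    have h3 : (2 * C₁) ^ α * μ₀ ^ α ≤ (2 * C₁) ^ α * max K (μ₀ ^ α) :=
      mul_le_mul_of_nonneg_left (le_max_right _ _) hpow.le
    rw [le_div_iff₀ hLα]
    calc a * L ^ α ≤ c * ((2 * C₁) ^ α * max K (μ₀ ^ α)) := by
          apply mul_le_mul hac (by rw [← h2] at h3; linarith) hLα.le hc.le
      _ = (2 * C₁) ^ α * max K (μ₀ ^ α) * c := by ring
end

section
/- Let C₁, C₂, α > 0. There exists K > 0 such that for every μ₀ > 0 and all a, b, c > 0 satisfying b ≤ C₂ c, a ≤ c, and a ≤ e^{C₁ μ} b + μ^{-α} c for all μ ≥ μ₀, one has c ≤ e^{D₂ (c/a)^{1/α}} b, with D₂ = 2C₁ max{K^{1/α}, μ₀}. -/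
/-- Optimization lemma, exponential-cost conclusion: if `b ≤ C₂ c`, `a ≤ c`, and
`a ≤ e^{C₁ μ} b + μ^{-α} c` for all `μ ≥ μ₀`, then
`c ≤ e^{D₂ (c/a)^{1/α}} b` with `D₂ = 2C₁ max{K^{1/α}, μ₀}`. -/
theorem exp_cost_observability (C₁ C₂ α : ℝ) (hC₁ : 0 < C₁) (hC₂ : 0 < C₂) (hα : 0 < α) :
    ∃ K : ℝ, 0 < K ∧ ∀ μ₀ : ℝ, 0 < μ₀ → ∀ a b c : ℝ, 0 < a → 0 < b → 0 < c →
      b ≤ C₂ * c → a ≤ c →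
      (∀ μ : ℝ, μ₀ ≤ μ → a ≤ Real.exp (C₁ * μ) * b + μ ^ (-α) * c) →
      c ≤ Real.exp (2 * C₁ * max (K ^ (1 / α)) μ₀ * (c / a) ^ (1 / α)) * b := by
  set L : ℝ := max ((2:ℝ) ^ (1/α)) (max (Real.log 2) α / C₁) with hLdef
  have hL2 : (2:ℝ) ^ (1/α) ≤ L := le_max_left _ _
  have hLpos : 0 < L := lt_of_lt_of_le (Real.rpow_pos_of_pos two_pos _) hL2
  have hC₁L : max (Real.log 2) α ≤ C₁ * L := by
    have := le_max_right ((2:ℝ) ^ (1/α)) (max (Real.log 2) α / C₁)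
    rw [div_le_iff₀ hC₁] at this
    calc max (Real.log 2) α ≤ L * C₁ := this
      _ = C₁ * L := mul_comm _ _
  have hKroot : (L ^ α) ^ (1/α) = L := by
    rw [← Real.rpow_mul hLpos.le, mul_one_div_cancel hα.ne', Real.rpow_one]
  have hK2 : (2:ℝ) ≤ L ^ α := by
    calc (2:ℝ) = ((2:ℝ) ^ (1/α)) ^ α := by
          rw [← Real.rpow_mul (by norm_num), one_div_mul_cancel hα.ne', Real.rpow_one]
      _ ≤ L ^ α := Real.rpow_le_rpow (Real.rpow_pos_of_pos two_pos _).le hL2 hα.le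
  refine ⟨L ^ α, Real.rpow_pos_of_pos hLpos α, ?_⟩
  intro μ₀ hμ₀ a b c ha hb hc hbc hac hμ
  rw [hKroot]
  set M : ℝ := max L μ₀ with hMdef
  have hML : L ≤ M := le_max_left _ _
  set t : ℝ := c / a with htdef
  have ht1 : (1:ℝ) ≤ t := (one_le_div ha).mpr hac
  have htpos : 0 < t := lt_of_lt_of_le one_pos ht1
  set T : ℝ := t ^ (1/α) with hTdef
  have hT1 : (1:ℝ) ≤ T := Real.one_le_rpow ht1 (by positivity)
  have hTpos : 0 < T := lt_of_lt_of_le one_pos hT1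
  set μ : ℝ := max (L * T) μ₀ with hμdef
  have hμge : μ₀ ≤ μ := le_max_right _ _
  have hμLT : L * T ≤ μ := le_max_left _ _
  have hμpos : 0 < μ := lt_of_lt_of_le (by positivity) hμLT
  have hμM : μ ≤ M * T := by
    apply max_le
    · exact mul_le_mul_of_nonneg_right hML hTpos.le
    · calc μ₀ ≤ μ₀ * T := le_mul_of_one_le_right hμ₀.le hT1
        _ ≤ M * T := mul_le_mul_of_nonneg_right (le_max_right _ _) hTpos.le
  -- bound μ ^ (-α) * c ≤ a / 2
  have hTinv : T ^ (-α) = a / c := by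
    rw [hTdef, ← Real.rpow_mul htpos.le]
    have : 1 / α * (-α) = -1 := by field_simp
    rw [this, Real.rpow_neg_one, htdef, inv_div]
  have hrw : (L * T) ^ (-α) = (L ^ α)⁻¹ * (a / c) := by
    rw [Real.mul_rpow hLpos.le hTpos.le, hTinv, Real.rpow_neg hLpos.le]
  have hres : μ ^ (-α) * c ≤ a / 2 := by
    have h1 : μ ^ (-α) ≤ (L * T) ^ (-α) :=
      Real.rpow_le_rpow_of_nonpos (by positivity) hμLT (neg_nonpos.mpr hα.le)
    have h2 : (L * T) ^ (-α) * c = (L ^ α)⁻¹ * a := by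
      rw [hrw]; field_simp
    have h3 : (L ^ α)⁻¹ * a ≤ a / 2 := by
      rw [div_eq_inv_mul]
      apply mul_le_mul_of_nonneg_right _ ha.le
      exact inv_anti₀ two_pos hK2
    calc μ ^ (-α) * c ≤ (L * T) ^ (-α) * c := mul_le_mul_of_nonneg_right h1 hc.le
      _ = (L ^ α)⁻¹ * a := h2
      _ ≤ a / 2 := h3
  -- main bound: a ≤ 2 exp(C₁ M T) b
  have hexpmono : Real.exp (C₁ * μ) ≤ Real.exp (C₁ * (M * T)) :=
    Real.exp_le_exp.mpr (mul_le_mul_of_nonneg_left hμM hC₁.le)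
  have hhalf : a / 2 ≤ Real.exp (C₁ * (M * T)) * b := by
    have := hμ μ hμge
    have h4 : a ≤ Real.exp (C₁ * μ) * b + a / 2 :=
      this.trans (by linarith [hres])
    have h5 : a / 2 ≤ Real.exp (C₁ * μ) * b := by linarith
    exact h5.trans (mul_le_mul_of_nonneg_right hexpmono hb.le)
  -- absorb the factor 2 t
  have habs : 2 * t ≤ Real.exp (C₁ * (M * T)) := by
    have hlogt : 0 ≤ Real.log t := Real.log_nonneg ht1
    have hTge : 1 + Real.log t / α ≤ T := by
      have hTexp : T = Real.exp (Real.log t * (1/α)) := Real.rpow_def_of_pos htpos (1/α)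
      rw [hTexp]
      calc 1 + Real.log t / α = Real.log t * (1/α) + 1 := by ring
        _ ≤ Real.exp (Real.log t * (1/α)) := Real.add_one_le_exp _
    have hCL2 : Real.log 2 ≤ C₁ * L := (le_max_left _ _).trans hC₁L
    have hCLα : α ≤ C₁ * L := (le_max_right _ _).trans hC₁L
    have key : Real.log 2 + Real.log t ≤ C₁ * (M * T) := by
      have h6 : C₁ * L * (1 + Real.log t / α) ≤ C₁ * L * T :=
        mul_le_mul_of_nonneg_left hTge (by positivity)
      have h7 : Real.log 2 + Real.log t ≤ C₁ * L * (1 + Real.log t / α) := by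
        have h8 : Real.log t = α * (Real.log t / α) := by field_simp
        have h9 : α * (Real.log t / α) ≤ C₁ * L * (Real.log t / α) :=
          mul_le_mul_of_nonneg_right hCLα (by positivity)
        nlinarith
      have h10 : C₁ * L * T ≤ C₁ * (M * T) := by
        rw [← mul_assoc]
        exact mul_le_mul_of_nonneg_right (mul_le_mul_of_nonneg_left hML hC₁.le) hTpos.le
      linarith
    calc 2 * t = Real.exp (Real.log 2 + Real.log t) := by
          rw [Real.exp_add, Real.exp_log two_pos, Real.exp_log htpos]
      _ ≤ Real.exp (C₁ * (M * T)) := Real.exp_le_exp.mpr key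
  -- conclude
  have hca : c = t * a := by rw [htdef]; field_simp
  have hfinal : c ≤ Real.exp (C₁ * (M * T)) * (Real.exp (C₁ * (M * T)) * b) := by
    calc c = t * a := hca
      _ ≤ t * (2 * (Real.exp (C₁ * (M * T)) * b)) := by
          apply mul_le_mul_of_nonneg_left _ htpos.le
          linarith
      _ = (2 * t) * (Real.exp (C₁ * (M * T)) * b) := by ring
      _ ≤ Real.exp (C₁ * (M * T)) * (Real.exp (C₁ * (M * T)) * b) :=
          mul_le_mul_of_nonneg_right habs (by positivity)
  calc c ≤ Real.exp (C₁ * (M * T)) * (Real.exp (C₁ * (M * T)) * b) := hfinal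
    _ = Real.exp (2 * C₁ * M * T) * b := by
        rw [← mul_assoc, ← Real.exp_add]; ring_nf
    _ = Real.exp (2 * C₁ * max L μ₀ * (c / a) ^ (1 / α)) * b := by
        rw [hMdef, hTdef, htdef]
end

section
/- For all x, y > 0, (4xy/π) ∫_0^∞ η² / ((x² + (y+η)²)(x² + (y−η)²)) dη = y. -/
open MeasureTheory Set Filter Real Topology

/-- For all `x, y > 0`,
`(4xy/π) ∫_0^∞ η² / ((x² + (y+η)²)(x² + (y−η)²)) dη = y`. -/
theorem poisson_kernel_integral_lin (x y : ℝ) (hx : 0 < x) (hy : 0 < y) :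
    4 * x * y / Real.pi *
        ∫ η in Ioi (0 : ℝ), η ^ 2 / ((x ^ 2 + (y + η) ^ 2) * (x ^ 2 + (y - η) ^ 2)) = y := by
  have hx0 : x ≠ 0 := hx.ne'
  have hy0 : y ≠ 0 := hy.ne'
  set F : ℝ → ℝ := fun η => (1 / (4 * y)) *
      ((1 / 2) * (Real.log (x ^ 2 + (η - y) ^ 2) - Real.log (x ^ 2 + (η + y) ^ 2)) +
        (y / x) * (Real.arctan ((η - y) / x) + Real.arctan ((η + y) / x))) with hF
  have hpos : ∀ a : ℝ, (0:ℝ) < x ^ 2 + a ^ 2 := fun a => by positivity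
  have hderiv : ∀ η : ℝ, HasDerivAt F
      (η ^ 2 / ((x ^ 2 + (y + η) ^ 2) * (x ^ 2 + (y - η) ^ 2))) η := by
    intro η
    have hB : HasDerivAt (fun η : ℝ => x ^ 2 + (η - y) ^ 2) (2 * (η - y)) η := by
      have := ((hasDerivAt_id η).sub_const y).pow 2
      simpa using (this.const_add (x ^ 2))
    have hA : HasDerivAt (fun η : ℝ => x ^ 2 + (η + y) ^ 2) (2 * (η + y)) η := by
      have := ((hasDerivAt_id η).add_const y).pow 2
      simpa using (this.const_add (x ^ 2))
    have hlogB := hB.log (hpos (η - y)).ne'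
    have hlogA := hA.log (hpos (η + y)).ne'
    have hatB : HasDerivAt (fun η : ℝ => Real.arctan ((η - y) / x))
        ((1 + ((η - y) / x) ^ 2)⁻¹ * x⁻¹) η := by
      have := (((hasDerivAt_id η).sub_const y).div_const x).arctan
      simpa using this
    have hatA : HasDerivAt (fun η : ℝ => Real.arctan ((η + y) / x))
        ((1 + ((η + y) / x) ^ 2)⁻¹ * x⁻¹) η := by
      have := (((hasDerivAt_id η).add_const y).div_const x).arctan
      simpa using this
    have h := (((hlogB.sub hlogA).const_mul (1/2 : ℝ)).add
        ((hatB.add hatA).const_mul (y / x))).const_mul (1 / (4 * y))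
    refine h.congr_deriv ?_
    have hB' := (hpos (η - y)).ne'
    have hA' := (hpos (η + y)).ne'
    have e1 : (1 : ℝ) + ((η - y) / x) ^ 2 = (x ^ 2 + (η - y) ^ 2) / x ^ 2 := by
      field_simp
    have e2 : (1 : ℝ) + ((η + y) / x) ^ 2 = (x ^ 2 + (η + y) ^ 2) / x ^ 2 := by
      field_simp
    rw [e1, e2]
    have h1 : x ^ 2 + (y + η) ^ 2 = x ^ 2 + (η + y) ^ 2 := by ring
    have h2 : x ^ 2 + (y - η) ^ 2 = x ^ 2 + (η - y) ^ 2 := by ring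
    rw [h1, h2]
    field_simp
    ring
  have hnonneg : ∀ η ∈ Ioi (0:ℝ),
      (0:ℝ) ≤ η ^ 2 / ((x ^ 2 + (y + η) ^ 2) * (x ^ 2 + (y - η) ^ 2)) := by
    intro η _; positivity
  -- limit at infinity
  have hdiv : Tendsto (fun η : ℝ => (η - y) / x) atTop atTop := by
    apply Tendsto.atTop_div_const hx
    exact tendsto_atTop_add_const_right _ (-y) tendsto_id
  have hdiv' : Tendsto (fun η : ℝ => (η + y) / x) atTop atTop := by
    apply Tendsto.atTop_div_const hx
    exact tendsto_atTop_add_const_right _ y tendsto_id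
  have hatanB : Tendsto (fun η : ℝ => Real.arctan ((η - y) / x)) atTop (𝓝 (π / 2)) :=
    (Real.tendsto_arctan_atTop.mono_right nhdsWithin_le_nhds).comp hdiv
  have hatanA : Tendsto (fun η : ℝ => Real.arctan ((η + y) / x)) atTop (𝓝 (π / 2)) :=
    (Real.tendsto_arctan_atTop.mono_right nhdsWithin_le_nhds).comp hdiv'
  have h0 : Tendsto (fun η : ℝ => η⁻¹) atTop (𝓝 (0:ℝ)) := tendsto_inv_atTop_zero
  have hratio : Tendsto (fun η : ℝ => (x ^ 2 + (η - y) ^ 2) / (x ^ 2 + (η + y) ^ 2))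
      atTop (𝓝 1) := by
    have hnum : Tendsto (fun η : ℝ => (x * η⁻¹) ^ 2 + (1 - y * η⁻¹) ^ 2) atTop (𝓝 1) := by
      have hc : Tendsto (fun _ : ℝ => (1:ℝ)) atTop (𝓝 (1:ℝ)) := tendsto_const_nhds
      have := (((h0.const_mul x).pow 2)).add ((hc.sub (h0.const_mul y)).pow 2)
      simpa using this
    have hden : Tendsto (fun η : ℝ => (x * η⁻¹) ^ 2 + (1 + y * η⁻¹) ^ 2) atTop (𝓝 1) := by
      have hc : Tendsto (fun _ : ℝ => (1:ℝ)) atTop (𝓝 (1:ℝ)) := tendsto_const_nhds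
      have := (((h0.const_mul x).pow 2)).add ((hc.add (h0.const_mul y)).pow 2)
      simpa using this
    have hG : Tendsto (fun η : ℝ =>
        ((x * η⁻¹) ^ 2 + (1 - y * η⁻¹) ^ 2) / ((x * η⁻¹) ^ 2 + (1 + y * η⁻¹) ^ 2))
        atTop (𝓝 1) := by
      simpa [Pi.div_def] using hnum.div hden one_ne_zero
    apply hG.congr'
    filter_upwards [eventually_gt_atTop (0:ℝ)] with η hη
    have hη0 : η ≠ 0 := hη.ne'
    field_simp
  have hlog : Tendsto (fun η : ℝ =>
      Real.log (x ^ 2 + (η - y) ^ 2) - Real.log (x ^ 2 + (η + y) ^ 2)) atTop (𝓝 0) := by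
    have h := (Real.continuousAt_log one_ne_zero).tendsto.comp hratio
    simp only [Real.log_one] at h
    apply h.congr
    intro η
    simp only [Function.comp]
    exact Real.log_div (hpos (η - y)).ne' (hpos (η + y)).ne'
  have hFlim : Tendsto F atTop
      (𝓝 ((1 / (4 * y)) * ((1 / 2) * 0 + (y / x) * (π / 2 + π / 2)))) := by
    exact (((hlog.const_mul (1/2 : ℝ))).add ((hatanB.add hatanA).const_mul (y / x))).const_mul _
  have hcont : ContinuousWithinAt F (Ici (0:ℝ)) 0 :=
    (hderiv 0).continuousAt.continuousWithinAt
  have key := integral_Ioi_of_hasDerivAt_of_nonneg hcont (fun η _ => hderiv η) hnonneg hFlim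
  have hF0 : F 0 = 0 := by
    simp [hF, zero_sub, zero_add, neg_sq, neg_div, Real.arctan_neg]
  rw [key, hF0]
  field_simp
  ring
end
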